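/- Under the assumptions of the previous statement (Mf(x₀) < ∞, h_k → 0, r_k ∈ best radii at x₀+h_k with r_k → ∞), one has (Mf(x₀+h_k) − Mf(x₀))/|h_k| → 0 as k → ∞. -/

import Mathlib

open Filter Topology MeasureTheory Metric ENNReal

/-- Average of `|f|` over the ball `B(x, r)`. -/
noncomputable def avgAbs (n : ℕ) (f : EuclideanSpace ℝ (Fin n) → ℝ)
    (x : EuclideanSpace ℝ (Fin n)) (r : ℝ) : ℝ :=
  ⨍ y in ball x r, |f y| ∂volume

/-- The centered Hardy–Littlewood maximal function, with values in `ℝ≥0∞`. -/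
noncomputable def maxFn (n : ℕ) (f : EuclideanSpace ℝ (Fin n) → ℝ)
    (x : EuclideanSpace ℝ (Fin n)) : ℝ≥0∞ :=
  ⨆ (r : ℝ) (_ : 0 < r), ENNReal.ofReal (avgAbs n f x r)
open Filter Topology MeasureTheory Metric ENNReal

lemma avg_nonneg (n : ℕ) (f : EuclideanSpace ℝ (Fin n) → ℝ)
    (x : EuclideanSpace ℝ (Fin n)) (s : ℝ) : 0 ≤ avgAbs n f x s := by
  rw [avgAbs, setAverage_eq, smul_eq_mul]
  exact mul_nonneg (by positivity)
    (setIntegral_nonneg measurableSet_ball fun y _ => abs_nonneg _)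

lemma ofReal_avg_le_maxFn (n : ℕ) (f : EuclideanSpace ℝ (Fin n) → ℝ)
    (x : EuclideanSpace ℝ (Fin n)) {s : ℝ} (hs : 0 < s) :
    ENNReal.ofReal (avgAbs n f x s) ≤ maxFn n f x :=
  le_iSup₂ (f := fun r (_ : 0 < r) => ENNReal.ofReal (avgAbs n f x r)) s hs

lemma avg_le_toReal (n : ℕ) (f : EuclideanSpace ℝ (Fin n) → ℝ)
    (x : EuclideanSpace ℝ (Fin n)) {s : ℝ} (hs : 0 < s) (hx : maxFn n f x ≠ ⊤) :
    avgAbs n f x s ≤ (maxFn n f x).toReal := by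
  have := ENNReal.toReal_mono hx (ofReal_avg_le_maxFn n f x hs)
  rwa [ENNReal.toReal_ofReal (avg_nonneg n f x s)] at this

lemma avg_comp (n : ℕ) (f : EuclideanSpace ℝ (Fin n) → ℝ)
    (hf : LocallyIntegrable f volume) (x y : EuclideanSpace ℝ (Fin n)) {s t : ℝ}
    (hs : 0 < s) (hst : s + dist x y ≤ t) :
    avgAbs n f x s ≤ (t / s) ^ n * avgAbs n f y t := by
  have hd : (0:ℝ) ≤ dist x y := dist_nonneg
  have ht : 0 < t := lt_of_lt_of_le (by linarith) hst
  have hsub : ball x s ⊆ ball y t := by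
    intro z hz
    rw [mem_ball] at hz ⊢
    calc dist z y ≤ dist z x + dist x y := dist_triangle z x y
    _ < s + dist x y := by linarith
    _ ≤ t := hst
  have hint : IntegrableOn (fun y => |f y|) (ball y t) volume :=
    ((hf.integrableOn_isCompact (isCompact_closedBall y t)).mono_set
      ball_subset_closedBall).abs
  have hmono : (∫ z in ball x s, |f z|) ≤ ∫ z in ball y t, |f z| :=
    setIntegral_mono_set hint (Eventually.of_forall fun z => abs_nonneg _)
      (HasSubset.Subset.eventuallyLE hsub)
  set c := (volume (ball (0 : EuclideanSpace ℝ (Fin n)) 1)).toReal with hc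
  have hcpos : 0 < c := ENNReal.toReal_pos (measure_ball_pos _ _ one_pos).ne'
    measure_ball_lt_top.ne
  have hvol : ∀ (z : EuclideanSpace ℝ (Fin n)) {u : ℝ}, 0 < u →
      (volume (ball z u)).toReal = u ^ n * c := by
    intro z u hu
    rw [Measure.addHaar_ball_of_pos volume z hu, finrank_euclideanSpace_fin,
      ENNReal.toReal_mul, ENNReal.toReal_ofReal (by positivity)]
  have hintnn : 0 ≤ ∫ z in ball x s, |f z| :=
    setIntegral_nonneg measurableSet_ball fun z _ => abs_nonneg _
  rw [avgAbs, avgAbs, setAverage_eq, setAverage_eq, smul_eq_mul, smul_eq_mul,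
    measureReal_def, measureReal_def, hvol x hs, hvol y ht]
  rw [div_pow]
  calc (s ^ n * c)⁻¹ * ∫ z in ball x s, |f z|
      ≤ (s ^ n * c)⁻¹ * ∫ z in ball y t, |f z| := by
        apply mul_le_mul_of_nonneg_left hmono (by positivity)
    _ = t ^ n / s ^ n * ((t ^ n * c)⁻¹ * ∫ z in ball y t, |f z|) := by
        field_simp
lemma pow_le_one_add_mul {x : ℝ} (hx : 0 ≤ x) (hx1 : x ≤ 1) (n : ℕ) :
    (1 + x) ^ n ≤ 1 + (2 ^ n - 1) * x := by
  induction n with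
  | zero => simp
  | succ m ih =>
    have h2 : (1:ℝ) ≤ 2 ^ m := one_le_pow₀ (by norm_num)
    calc (1 + x) ^ (m + 1) = (1 + x) ^ m * (1 + x) := by ring
    _ ≤ (1 + (2 ^ m - 1) * x) * (1 + x) := by
        apply mul_le_mul_of_nonneg_right ih (by linarith)
    _ = 1 + 2 ^ m * x + (2 ^ m - 1) * x ^ 2 := by ring
    _ ≤ 1 + 2 ^ m * x + (2 ^ m - 1) * x := by
        have hxx : x ^ 2 ≤ x := by nlinarith
        nlinarith [hxx, h2]
    _ ≤ 1 + (2 ^ (m + 1) - 1) * x := by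
        have : (2:ℝ) ^ (m+1) = 2 * 2 ^ m := by ring
        nlinarith
lemma one_sub_le_pow_div {u v : ℝ} (hu : 0 < u) (hv : 0 ≤ v) (n : ℕ) :
    1 - n * v / u ≤ (u / (u + v)) ^ n := by
  have huv : 0 < u + v := by linarith
  have h1 : u / (u + v) = 1 + (-(v / (u + v))) := by field_simp; ring
  have h2 : (-2:ℝ) ≤ -(v / (u + v)) := by
    have : v / (u + v) ≤ 1 := by rw [div_le_one huv]; linarith
    linarith
  have := one_add_mul_le_pow h2 n
  rw [← h1] at this
  refine le_trans ?_ this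
  have : (n:ℝ) * (v / (u + v)) ≤ n * (v / u) := by
    apply mul_le_mul_of_nonneg_left _ (Nat.cast_nonneg n)
    apply div_le_div_of_nonneg_left hv hu (by linarith)
  rw [mul_div_assoc]
  linarith

lemma exists_avg_gt (n : ℕ) (f : EuclideanSpace ℝ (Fin n) → ℝ)
    (x₀ : EuclideanSpace ℝ (Fin n)) (hfin : maxFn n f x₀ ≠ ⊤) {δ : ℝ} (hδ : 0 < δ) :
    ∃ s, 0 < s ∧ (maxFn n f x₀).toReal - δ < avgAbs n f x₀ s := by
  set A := (maxFn n f x₀).toReal with hA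
  rcases eq_or_lt_of_le (zero_le : 0 ≤ maxFn n f x₀) with h0 | hpos
  · refine ⟨1, one_pos, ?_⟩
    have : A = 0 := by rw [hA, ← h0]; simp
    have := avg_nonneg n f x₀ 1
    linarith
  · have hApos : 0 < A := ENNReal.toReal_pos (by exact hpos.ne') hfin
    have hlt : ENNReal.ofReal (A - δ) < maxFn n f x₀ := by
      calc ENNReal.ofReal (A - δ) < ENNReal.ofReal A :=
        ENNReal.ofReal_lt_ofReal_iff hApos |>.mpr (by linarith)
      _ = maxFn n f x₀ := ENNReal.ofReal_toReal hfin
    rw [maxFn, lt_iSup_iff] at hlt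
    obtain ⟨s, hlt⟩ := hlt
    rw [lt_iSup_iff] at hlt
    obtain ⟨hs, hlt⟩ := hlt
    refine ⟨s, hs, ?_⟩
    by_contra hcon
    push_neg at hcon
    exact absurd (ENNReal.ofReal_le_ofReal hcon) (not_le.mpr hlt)
example (a b : EuclideanSpace ℝ (Fin 2)) : dist (a + b) a = ‖b‖ := dist_self_add_left b a
example (a b : EuclideanSpace ℝ (Fin 2)) : dist a (a + b) = ‖b‖ := dist_self_add_right b a

lemma exists_large_avg_gt (n : ℕ) (f : EuclideanSpace ℝ (Fin n) → ℝ)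
    (hf : LocallyIntegrable f volume)
    (x₀ : EuclideanSpace ℝ (Fin n)) (hfin : maxFn n f x₀ < ⊤)
    (h : ℕ → EuclideanSpace ℝ (Fin n)) (r : ℕ → ℝ) (hr0 : ∀ k, 0 < r k)
    (hbest : ∀ k, maxFn n f (x₀ + h k) = ENNReal.ofReal (avgAbs n f (x₀ + h k) (r k)))
    (hh : Tendsto h atTop (𝓝 0)) (hrinf : Tendsto r atTop atTop)
    {S δ : ℝ} (hS : 0 < S) (hδ : 0 < δ) :
    ∃ s, S ≤ s ∧ 0 < s ∧ (maxFn n f x₀).toReal - δ < avgAbs n f x₀ s := by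
  set A := (maxFn n f x₀).toReal with hA
  have hA0 : 0 ≤ A := ENNReal.toReal_nonneg
  set H : ℕ → ℝ := fun k => ‖h k‖ with hHdef
  have hH0 : ∀ k, 0 ≤ H k := fun k => norm_nonneg _
  have hane : ∀ k, maxFn n f (x₀ + h k) ≠ ⊤ := fun k => by
    rw [hbest k]; exact ENNReal.ofReal_ne_top
  set a : ℕ → ℝ := fun k => (maxFn n f (x₀ + h k)).toReal with hadef
  have haeq : ∀ k, a k = avgAbs n f (x₀ + h k) (r k) := fun k => by
    simp only [hadef]; rw [hbest k, ENNReal.toReal_ofReal (avg_nonneg _ _ _ _)]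
  have ha0 : ∀ k, 0 ≤ a k := fun k => ENNReal.toReal_nonneg
  obtain ⟨s₀, hs₀, hB⟩ := exists_avg_gt n f x₀ hfin.ne (half_pos hδ)
  set B := avgAbs n f x₀ s₀ with hBdef
  have hB0 : 0 ≤ B := avg_nonneg _ _ _ _
  have hBA : B ≤ A := avg_le_toReal n f x₀ hs₀ hfin.ne
  set η : ℝ := min (δ / (2 * (A + 1))) 1 with hη
  have hηpos : 0 < η := lt_min (by positivity) one_pos
  have hη1 : η ≤ 1 := min_le_right _ _
  have hηB : η * B ≤ δ / 2 := by
    have h1 : η * B ≤ δ / (2 * (A + 1)) * B :=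
      mul_le_mul_of_nonneg_right (min_le_left _ _) hB0
    have h2 : δ / (2 * (A + 1)) * B ≤ δ / 2 := by
      rw [div_mul_eq_mul_div, div_le_div_iff₀ (by positivity) (by norm_num)]
      nlinarith
    linarith
  -- tendsto facts
  have hH : Tendsto H atTop (𝓝 0) := by
    have := hh.norm
    rwa [norm_zero] at this
  have tα : Tendsto (fun j => (n : ℝ) * H j / r j) atTop (𝓝 0) :=
    Tendsto.div_atTop (hH.const_mul _) hrinf
  have tβ : Tendsto (fun j => (n : ℝ) * H j / s₀) atTop (𝓝 0) := by
    have := (hH.const_mul (n : ℝ)).div_const s₀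
    simpa using this
  have ev1 : ∀ᶠ j in atTop, S ≤ r j := hrinf.eventually_ge_atTop S
  have ev2 : ∀ᶠ j in atTop, (n : ℝ) * H j / r j < η / 2 :=
    tα.eventually_lt_const (by positivity)
  have ev3 : ∀ᶠ j in atTop, (n : ℝ) * H j / s₀ < η / 2 :=
    tβ.eventually_lt_const (by positivity)
  obtain ⟨j, h1, h2, h3⟩ := (ev1.and (ev2.and ev3)).exists
  have hrj := hr0 j
  have hHj := hH0 j
  refine ⟨r j + H j, by linarith, by linarith, ?_⟩
  -- step 1 : a j ≤ ((r j + H j)/ r j)^n * avg(x₀, r j + H j)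
  have step1 : a j ≤ ((r j + H j) / r j) ^ n * avgAbs n f x₀ (r j + H j) := by
    rw [haeq j]
    apply avg_comp n f hf _ _ hrj
    rw [dist_self_add_left]
  -- hence avg(x₀, r j + H j) ≥ (r j/(r j + H j))^n * a j
  have c1B : (1 - (n : ℝ) * H j / r j) ≤ (r j / (r j + H j)) ^ n :=
    one_sub_le_pow_div hrj hHj n
  have step1' : (r j / (r j + H j)) ^ n * a j ≤ avgAbs n f x₀ (r j + H j) := by
    have hq : (r j / (r j + H j)) ^ n * ((r j + H j) / r j) ^ n = 1 := by
      rw [← mul_pow]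
      have : r j / (r j + H j) * ((r j + H j) / r j) = 1 := by
        field_simp
      rw [this, one_pow]
    calc (r j / (r j + H j)) ^ n * a j
        ≤ (r j / (r j + H j)) ^ n * (((r j + H j) / r j) ^ n
            * avgAbs n f x₀ (r j + H j)) :=
          mul_le_mul_of_nonneg_left step1 (by positivity)
      _ = avgAbs n f x₀ (r j + H j) := by rw [← mul_assoc, hq, one_mul]
  -- step 2 : B ≤ ((s₀ + H j)/s₀)^n * a j
  have step2 : B ≤ ((s₀ + H j) / s₀) ^ n * a j := by
    rw [hBdef]
    calc avgAbs n f x₀ s₀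
        ≤ ((s₀ + H j) / s₀) ^ n * avgAbs n f (x₀ + h j) (s₀ + H j) := by
          apply avg_comp n f hf _ _ hs₀
          rw [dist_self_add_right]
      _ ≤ ((s₀ + H j) / s₀) ^ n * a j := by
          apply mul_le_mul_of_nonneg_left
            (avg_le_toReal n f _ (by positivity) (hane j)) (by positivity)
  have c2B : (1 - (n : ℝ) * H j / s₀) ≤ (s₀ / (s₀ + H j)) ^ n :=
    one_sub_le_pow_div hs₀ hHj n
  have step2' : (s₀ / (s₀ + H j)) ^ n * B ≤ a j := by
    have hq : (s₀ / (s₀ + H j)) ^ n * ((s₀ + H j) / s₀) ^ n = 1 := by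
      rw [← mul_pow]
      have : s₀ / (s₀ + H j) * ((s₀ + H j) / s₀) = 1 := by
        field_simp
      rw [this, one_pow]
    calc (s₀ / (s₀ + H j)) ^ n * B
        ≤ (s₀ / (s₀ + H j)) ^ n * (((s₀ + H j) / s₀) ^ n * a j) :=
          mul_le_mul_of_nonneg_left step2 (by positivity)
      _ = a j := by rw [← mul_assoc, hq, one_mul]
  -- combine
  set α : ℝ := (n : ℝ) * H j / r j with hα
  set β : ℝ := (n : ℝ) * H j / s₀ with hβ
  have hα0 : 0 ≤ α := by positivity
  have hβ0 : 0 ≤ β := by positivity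
  have hP0 : (0:ℝ) ≤ (r j / (r j + H j)) ^ n := by positivity
  have step3 : (r j / (r j + H j)) ^ n * ((s₀ / (s₀ + H j)) ^ n * B)
      ≤ avgAbs n f x₀ (r j + H j) :=
    le_trans (mul_le_mul_of_nonneg_left step2' hP0) step1'
  have hQB : (1 - β) * B ≤ (s₀ / (s₀ + H j)) ^ n * B :=
    mul_le_mul_of_nonneg_right c2B hB0
  have hQB0 : 0 ≤ (1 - β) * B := by
    apply mul_nonneg _ hB0
    linarith
  have hPQB : (1 - α) * ((1 - β) * B)
      ≤ (r j / (r j + H j)) ^ n * ((s₀ / (s₀ + H j)) ^ n * B) :=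
    mul_le_mul c1B hQB hQB0 hP0
  have hfinal : A - δ < (1 - α) * ((1 - β) * B) := by
    nlinarith [mul_le_mul_of_nonneg_right h2.le hB0,
      mul_le_mul_of_nonneg_right h3.le hB0,
      mul_nonneg (mul_nonneg hα0 hβ0) hB0]
  linarith
theorem difference_quotient_tendsto_zero_of_best_radii_tendsto_infty
    (n : ℕ) (f : EuclideanSpace ℝ (Fin n) → ℝ) (hf : LocallyIntegrable f volume)
    (x₀ : EuclideanSpace ℝ (Fin n)) (hfin : maxFn n f x₀ < ⊤)
    (h : ℕ → EuclideanSpace ℝ (Fin n)) (r : ℕ → ℝ) (hr0 : ∀ k, 0 < r k)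
    (hbest : ∀ k, maxFn n f (x₀ + h k) = ENNReal.ofReal (avgAbs n f (x₀ + h k) (r k)))
    (hh : Tendsto h atTop (𝓝 0)) (hrinf : Tendsto r atTop atTop) :
    Tendsto (fun k => ((maxFn n f (x₀ + h k)).toReal - (maxFn n f x₀).toReal) / ‖h k‖)
      atTop (𝓝 0) := by
  have hAne : maxFn n f x₀ ≠ ⊤ := hfin.ne
  set A := (maxFn n f x₀).toReal with hA
  have hA0 : 0 ≤ A := ENNReal.toReal_nonneg
  have hane : ∀ k, maxFn n f (x₀ + h k) ≠ ⊤ := fun k => by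
    rw [hbest k]; exact ENNReal.ofReal_ne_top
  set a : ℕ → ℝ := fun k => (maxFn n f (x₀ + h k)).toReal with hadef
  have haeq : ∀ k, a k = avgAbs n f (x₀ + h k) (r k) := fun k => by
    simp only [hadef]; rw [hbest k, ENNReal.toReal_ofReal (avg_nonneg _ _ _ _)]
  have ha0 : ∀ k, 0 ≤ a k := fun k => ENNReal.toReal_nonneg
  have hH : Tendsto (fun k => ‖h k‖) atTop (𝓝 0) := by
    have := hh.norm; rwa [norm_zero] at this
  have hH0 : ∀ k, (0:ℝ) ≤ ‖h k‖ := fun k => norm_nonneg _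
  -- lower bound, valid for every k
  have lower : ∀ ε : ℝ, 0 < ε → ∀ k, A - a k ≤ ε * ‖h k‖ := by
    intro ε hε k
    by_cases hk : h k = 0
    · have hak : a k = A := by simp only [hadef, hA, hk, add_zero]
      rw [hak, hk, norm_zero, mul_zero, sub_self]
    · have hHk : 0 < ‖h k‖ := norm_pos_iff.mpr hk
      obtain ⟨s, hsS, hs0, havg⟩ := exists_large_avg_gt n f hf x₀ hfin h r hr0 hbest hh
        hrinf (S := max 1 (2 * n * A / ε))
        (lt_of_lt_of_le one_pos (le_max_left _ _)) (δ := ε / 2 * ‖h k‖) (by positivity)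
      rw [← hA] at havg
      have havg0 : 0 ≤ avgAbs n f x₀ s := avg_nonneg _ _ _ _
      have havgA : avgAbs n f x₀ s ≤ A := avg_le_toReal n f x₀ hs0 hAne
      -- a k ≥ (s/(s+‖h k‖))^n * avg
      have step2 : avgAbs n f x₀ s ≤ ((s + ‖h k‖) / s) ^ n * a k := by
        calc avgAbs n f x₀ s
            ≤ ((s + ‖h k‖) / s) ^ n * avgAbs n f (x₀ + h k) (s + ‖h k‖) := by
              apply avg_comp n f hf _ _ hs0
              rw [dist_self_add_right]
          _ ≤ ((s + ‖h k‖) / s) ^ n * a k :=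
              mul_le_mul_of_nonneg_left
                (avg_le_toReal n f _ (by positivity) (hane k)) (by positivity)
      have step2' : (s / (s + ‖h k‖)) ^ n * avgAbs n f x₀ s ≤ a k := by
        have hq : (s / (s + ‖h k‖)) ^ n * ((s + ‖h k‖) / s) ^ n = 1 := by
          rw [← mul_pow]
          have : s / (s + ‖h k‖) * ((s + ‖h k‖) / s) = 1 := by field_simp
          rw [this, one_pow]
        calc (s / (s + ‖h k‖)) ^ n * avgAbs n f x₀ s
            ≤ (s / (s + ‖h k‖)) ^ n * (((s + ‖h k‖) / s) ^ n * a k) :=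
              mul_le_mul_of_nonneg_left step2 (by positivity)
          _ = a k := by rw [← mul_assoc, hq, one_mul]
      have c2B : 1 - (n:ℝ) * ‖h k‖ / s ≤ (s / (s + ‖h k‖)) ^ n :=
        one_sub_le_pow_div hs0 (hH0 k) n
      have hnsA : (n:ℝ) * A / s ≤ ε / 2 := by
        have hs2 : 2 * n * A / ε ≤ s := le_trans (le_max_right _ _) hsS
        rw [div_le_iff₀ hs0]
        have h2 : 2 * (n:ℝ) * A ≤ s * ε := (div_le_iff₀ hε).mp hs2
        linarith
      have h1q : (1 - (s / (s + ‖h k‖)) ^ n) * avgAbs n f x₀ s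
          ≤ ((n:ℝ) * ‖h k‖ / s) * A :=
        mul_le_mul (by linarith) havgA havg0 (by positivity)
      have hid : ((n:ℝ) * ‖h k‖ / s) * A = ((n:ℝ) * A / s) * ‖h k‖ := by ring
      have hmul : ((n:ℝ) * A / s) * ‖h k‖ ≤ (ε / 2) * ‖h k‖ :=
        mul_le_mul_of_nonneg_right hnsA (hH0 k)
      have hqavg : (s / (s + ‖h k‖)) ^ n * avgAbs n f x₀ s
          = avgAbs n f x₀ s - (1 - (s / (s + ‖h k‖)) ^ n) * avgAbs n f x₀ s := by
        ring
      linarith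
  -- upper bound, eventual
  have upper : ∀ ε : ℝ, 0 < ε → ∀ᶠ k in atTop, a k - A ≤ ε * ‖h k‖ := by
    intro ε hε
    have ev1 : ∀ᶠ k in atTop, ‖h k‖ < 1 := hH.eventually_lt_const one_pos
    have ev2 : ∀ᶠ k in atTop, (2 ^ n * A + 1) / ε ≤ r k := hrinf.eventually_ge_atTop _
    have ev3 : ∀ᶠ k in atTop, (1:ℝ) ≤ r k := hrinf.eventually_ge_atTop 1
    filter_upwards [ev1, ev2, ev3] with k e1 e2 e3
    have hrk := hr0 k
    have hHr : ‖h k‖ ≤ r k := le_trans e1.le e3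
    have s1 : a k ≤ ((r k + ‖h k‖) / r k) ^ n * A := by
      rw [haeq k]
      calc avgAbs n f (x₀ + h k) (r k)
          ≤ ((r k + ‖h k‖) / r k) ^ n * avgAbs n f x₀ (r k + ‖h k‖) := by
            apply avg_comp n f hf _ _ hrk
            rw [dist_self_add_left]
        _ ≤ ((r k + ‖h k‖) / r k) ^ n * A :=
            mul_le_mul_of_nonneg_left
              (avg_le_toReal n f x₀ (by positivity) hAne) (by positivity)
    have hx01 : (r k + ‖h k‖) / r k = 1 + ‖h k‖ / r k := by field_simp
    have hb : ((r k + ‖h k‖) / r k) ^ n ≤ 1 + ((2:ℝ) ^ n - 1) * (‖h k‖ / r k) := by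
      rw [hx01]
      exact pow_le_one_add_mul (by positivity) ((div_le_one hrk).mpr hHr) n
    have hbA : ((r k + ‖h k‖) / r k) ^ n * A
        ≤ (1 + ((2:ℝ) ^ n - 1) * (‖h k‖ / r k)) * A :=
      mul_le_mul_of_nonneg_right hb hA0
    have hfin2 : ((2:ℝ) ^ n - 1) * (‖h k‖ / r k) * A ≤ ε * ‖h k‖ := by
      have heq : ((2:ℝ) ^ n - 1) * (‖h k‖ / r k) * A
          = (((2:ℝ) ^ n - 1) * ‖h k‖ * A) / r k := by ring
      rw [heq, div_le_iff₀ hrk]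
      have h2 : (2:ℝ) ^ n * A + 1 ≤ r k * ε := (div_le_iff₀ hε).mp e2
      nlinarith [mul_le_mul_of_nonneg_right h2 (hH0 k), mul_nonneg hA0 (hH0 k),
        hH0 k]
    nlinarith [s1, hbA, hfin2]
  -- conclusion
  rw [NormedAddCommGroup.tendsto_nhds_zero]
  intro ε hε
  have hε2 : 0 < ε / 2 := half_pos hε
  filter_upwards [upper (ε / 2) hε2] with k hup
  have hlow := lower (ε / 2) hε2 k
  have habs : |a k - A| ≤ ε / 2 * ‖h k‖ := abs_le.mpr ⟨by linarith, hup⟩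
  show ‖(a k - A) / ‖h k‖‖ < ε
  rcases eq_or_lt_of_le (hH0 k) with h0 | hpos
  · have : (a k - A) / ‖h k‖ = 0 := by rw [← h0]; simp
    rw [this, norm_zero]; exact hε
  · rw [Real.norm_eq_abs, abs_div, abs_of_pos hpos, div_lt_iff₀ hpos]
    calc |a k - A| ≤ ε / 2 * ‖h k‖ := habs
      _ < ε * ‖h k‖ := by nlinarith
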